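/- Fix an integer k ≥ 1 and set m̃_k(e^{-s}) = ω_{k,1} s^{-(1+1/k)} for s > 0, where ω_{k,1} = (1/k) ζ(1+1/k) Γ(1+1/k). Then (m_k(e^{-s}) − m̃_k(e^{-s})) / σ_k(e^{-s}) = O(s^{1/(2k)}) as s ↓ 0; that is, there exist C > 0 and s₀ > 0 such that |m_k(e^{-s}) − m̃_k(e^{-s})| ≤ C s^{1/(2k)} σ_k(e^{-s}) for all 0 < s < s₀. -/

import Mathlib

open Filter Topology

/-- Mean of the Khinchin family of `P_k` at `t = e^{-s}`:
`m_k(e^{-s}) = Σ_{j≥1} j^k e^{-j^k s}/(1 - e^{-j^k s})`. -/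
noncomputable def mkS (k : ℕ) (s : ℝ) : ℝ :=
  ∑' j : ℕ, (((j + 1) ^ k : ℕ) : ℝ) * Real.exp (-((((j + 1) ^ k : ℕ) : ℝ) * s)) /
    (1 - Real.exp (-((((j + 1) ^ k : ℕ) : ℝ) * s)))

/-- Variance of the Khinchin family of `P_k` at `t = e^{-s}`:
`σ_k²(e^{-s}) = Σ_{j≥1} j^{2k} e^{-j^k s}/(1 - e^{-j^k s})²`. -/
noncomputable def sigSq (k : ℕ) (s : ℝ) : ℝ :=
  ∑' j : ℕ, (((j + 1) ^ (2 * k) : ℕ) : ℝ) * Real.exp (-((((j + 1) ^ k : ℕ) : ℝ) * s)) /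
    (1 - Real.exp (-((((j + 1) ^ k : ℕ) : ℝ) * s))) ^ 2

/-- `ω_{k,1} = (1/k) ζ(1+1/k) Γ(1+1/k)`. -/
noncomputable def omega1 (k : ℕ) : ℝ :=
  (1 / k) * (riemannZeta (1 + 1 / (k : ℂ))).re * Real.Gamma (1 + 1 / k)

section Aux
open Real MeasureTheory Set
open scoped ENNReal


lemma exp_ratio_mono {u v : ℝ} (hv : 0 < v) (huv : v ≤ u) :
    u * (Real.exp v - 1) ≤ v * (Real.exp u - 1) := by
  have hu : 0 < u := lt_of_lt_of_le hv huv
  have hc := convexOn_exp.2 (Set.mem_univ (0:ℝ)) (Set.mem_univ u)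
    (show (0:ℝ) ≤ 1 - v/u by rw [sub_nonneg]; exact div_le_one_of_le₀ huv hu.le)
    (show (0:ℝ) ≤ v/u by positivity) (by ring)
  simp only [smul_eq_mul, mul_zero, zero_add, Real.exp_zero, mul_one] at hc
  have h2 : Real.exp v ≤ 1 - v/u + v/u * Real.exp u := by
    rw [div_mul_cancel₀ v hu.ne'] at hc
    exact hc
  have := mul_le_mul_of_nonneg_left h2 hu.le
  have h3 : u * (1 - v/u + v/u * Real.exp u) = u - v + v * Real.exp u := by
    field_simp
  nlinarith

noncomputable def gfun (k : ℕ) (s : ℝ) (x : ℝ) : ℝ := x ^ k / (Real.exp (s * x ^ k) - 1)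

lemma exp_sub_one_pos {t : ℝ} (ht : 0 < t) : 0 < Real.exp t - 1 := by
  simpa using Real.exp_lt_exp.2 ht

lemma gfun_eq {k : ℕ} {s x : ℝ} (hs : 0 < s) (hx : 0 < x) :
    gfun k s x = x ^ k * Real.exp (-(s * x ^ k)) / (1 - Real.exp (-(s * x ^ k))) := by
  have ht : 0 < s * x ^ k := by positivity
  rw [gfun]
  rw [show (1 : ℝ) - Real.exp (-(s * x ^ k))
      = Real.exp (-(s * x ^ k)) * (Real.exp (s * x ^ k) - 1) by
    rw [mul_sub, ← Real.exp_add, neg_add_cancel, Real.exp_zero, mul_one]]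
  rw [mul_comm (x ^ k), mul_div_mul_left _ _ (Real.exp_ne_zero _)]

lemma gfun_nonneg {k : ℕ} {s x : ℝ} (hs : 0 < s) (hx : 0 < x) : 0 ≤ gfun k s x := by
  have ht : 0 < s * x ^ k := by positivity
  have := exp_sub_one_pos ht
  rw [gfun]; positivity

lemma gfun_le {k : ℕ} {s x : ℝ} (hs : 0 < s) (hx : 0 < x) : gfun k s x ≤ 1 / s := by
  have ht : 0 < s * x ^ k := by positivity
  have h1 := exp_sub_one_pos ht
  rw [gfun, div_le_div_iff₀ h1 hs]
  have := Real.add_one_le_exp (s * x ^ k)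
  nlinarith

lemma gfun_anti {k : ℕ} {s : ℝ} (hs : 0 < s) {x y : ℝ} (hx : 0 < x) (hxy : x ≤ y) :
    gfun k s y ≤ gfun k s x := by
  rcases Nat.eq_zero_or_pos k with hk | hk
  · simp [gfun, hk]
  have hy : 0 < y := lt_of_lt_of_le hx hxy
  have hpk : x ^ k ≤ y ^ k := pow_le_pow_left₀ hx.le hxy k
  have hv : 0 < s * x ^ k := by positivity
  have hu : s * x ^ k ≤ s * y ^ k := by nlinarith
  have key := exp_ratio_mono hv hu
  have h1 := exp_sub_one_pos hv
  have h2 := exp_sub_one_pos (lt_of_lt_of_le hv hu)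
  rw [gfun, gfun, div_le_div_iff₀ h2 h1]
  nlinarith

lemma summable_aux (m : ℕ) {r : ℝ} (h0 : 0 ≤ r) (h1 : r < 1) :
    Summable (fun j : ℕ => ((j : ℝ) + 1) ^ m * r ^ (j + 1)) := by
  have h := summable_pow_mul_geometric_of_norm_lt_one (R := ℝ) m
    (show ‖r‖ < 1 by rwa [Real.norm_eq_abs, abs_of_nonneg h0])
  have h2 := h.comp_injective (show Function.Injective (fun n : ℕ => n + 1) from
    fun a b hab => by simpa using hab)
  refine h2.congr fun j => ?_
  simp only [Function.comp]
  push_cast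
  ring

lemma mkS_eq {k : ℕ} {s : ℝ} (hs : 0 < s) :
    mkS k s = ∑' j : ℕ, gfun k s ((j : ℝ) + 1) := by
  refine tsum_congr fun j => ?_
  rw [gfun_eq hs (by positivity)]
  push_cast
  ring_nf

lemma summable_gfun {k : ℕ} (hk : 1 ≤ k) {s : ℝ} (hs : 0 < s) :
    Summable (fun j : ℕ => gfun k s ((j : ℝ) + 1)) := by
  have hr0 : (0:ℝ) ≤ Real.exp (-s) := (Real.exp_pos _).le
  have hr1 : Real.exp (-s) < 1 := Real.exp_lt_one_iff.2 (by linarith)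
  have hden : 0 < 1 - Real.exp (-s) := by linarith
  refine Summable.of_nonneg_of_le (fun j => gfun_nonneg hs (by positivity))
    (fun j => ?_) (((summable_aux k hr0 hr1).div_const (1 - Real.exp (-s))))
  set x : ℝ := (j : ℝ) + 1 with hx
  have hx1 : (1:ℝ) ≤ x := le_add_of_nonneg_left j.cast_nonneg
  have hxk : x ≤ x ^ k := le_self_pow₀ (by linarith) (by omega)
  have htt : s ≤ s * x ^ k := by nlinarith
  have ht : 0 < s * x ^ k := by positivity
  rw [gfun_eq hs (by positivity)]
  have hnum : Real.exp (-(s * x ^ k)) ≤ Real.exp (-s) ^ (j+1) := by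
    rw [← Real.exp_nat_mul]
    apply Real.exp_le_exp.2
    push_cast
    nlinarith
  have hden2 : 1 - Real.exp (-s) ≤ 1 - Real.exp (-(s * x ^ k)) := by
    have : Real.exp (-(s * x ^ k)) ≤ Real.exp (-s) := Real.exp_le_exp.2 (by linarith)
    linarith
  apply div_le_div₀ (by positivity) _ hden (by linarith)
  have : (0:ℝ) ≤ x ^ k := by positivity
  nlinarith

lemma sig_term_nonneg {k : ℕ} {s : ℝ} (hs : 0 < s) (j : ℕ) :
    0 ≤ (((j + 1) ^ (2 * k) : ℕ) : ℝ) * Real.exp (-((((j + 1) ^ k : ℕ) : ℝ) * s)) /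
      (1 - Real.exp (-((((j + 1) ^ k : ℕ) : ℝ) * s))) ^ 2 := by
  have hA : (0:ℝ) < (((j + 1) ^ k : ℕ) : ℝ) := by positivity
  have h1 : Real.exp (-((((j + 1) ^ k : ℕ) : ℝ) * s)) < 1 :=
    Real.exp_lt_one_iff.2 (by nlinarith)
  have h2 : (0:ℝ) < 1 - Real.exp (-((((j + 1) ^ k : ℕ) : ℝ) * s)) := by linarith
  positivity

lemma summable_sigSq {k : ℕ} (hk : 1 ≤ k) {s : ℝ} (hs : 0 < s) :
    Summable (fun j : ℕ => (((j + 1) ^ (2 * k) : ℕ) : ℝ) *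
      Real.exp (-((((j + 1) ^ k : ℕ) : ℝ) * s)) /
      (1 - Real.exp (-((((j + 1) ^ k : ℕ) : ℝ) * s))) ^ 2) := by
  have hr0 : (0:ℝ) ≤ Real.exp (-s) := (Real.exp_pos _).le
  have hr1 : Real.exp (-s) < 1 := Real.exp_lt_one_iff.2 (by linarith)
  have hden : 0 < 1 - Real.exp (-s) := by linarith
  refine Summable.of_nonneg_of_le (sig_term_nonneg hs) (fun j => ?_)
    (((summable_aux (2*k) hr0 hr1).div_const ((1 - Real.exp (-s))^2)))
  have hx1 : (1:ℝ) ≤ (j:ℝ) + 1 := le_add_of_nonneg_left j.cast_nonneg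
  have hA : (1:ℝ) ≤ (((j + 1) ^ k : ℕ) : ℝ) := by
    rw [Nat.cast_pow]; push_cast; exact one_le_pow₀ hx1
  have hAj : ((j:ℝ) + 1) ≤ (((j + 1) ^ k : ℕ) : ℝ) := by
    rw [Nat.cast_pow]; push_cast
    exact le_self_pow₀ hx1 (by omega)
  have hts : s ≤ (((j + 1) ^ k : ℕ) : ℝ) * s := by nlinarith
  have hAj' : ((j:ℝ) + 1) ≤ ((j:ℝ) + 1) ^ k := le_self_pow₀ hx1 (by omega)
  have hnum : Real.exp (-((((j + 1) ^ k : ℕ) : ℝ) * s)) ≤ Real.exp (-s) ^ (j+1) := by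
    rw [← Real.exp_nat_mul]
    apply Real.exp_le_exp.2
    push_cast
    nlinarith
  have hden2 : (1 - Real.exp (-s))^2 ≤ (1 - Real.exp (-((((j + 1) ^ k : ℕ) : ℝ) * s)))^2 := by
    have h3 : Real.exp (-((((j + 1) ^ k : ℕ) : ℝ) * s)) ≤ Real.exp (-s) :=
      Real.exp_le_exp.2 (by linarith)
    nlinarith
  have hB : (((j + 1) ^ (2*k) : ℕ) : ℝ) = ((j:ℝ)+1) ^ (2*k) := by push_cast; ring
  rw [hB]
  apply div_le_div₀ (by positivity) _ (by positivity) hden2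
  have : (0:ℝ) ≤ ((j:ℝ)+1)^(2*k) := by positivity
  nlinarith

lemma sigSq_lower {k : ℕ} (hk : 1 ≤ k) {s : ℝ} (hs : 0 < s) (hs1 : s < 1) :
    Real.exp (-(2:ℝ)^k) * s ^ (-(2 + 1/(k:ℝ))) ≤ sigSq k s := by
  have hk0 : (0:ℝ) < k := by positivity
  set x : ℝ := s ^ (-(1/(k:ℝ))) with hxdef
  have hx1 : (1:ℝ) ≤ x := by
    exact Real.one_le_rpow_of_pos_of_le_one_of_nonpos hs hs1.le
      (neg_nonpos.mpr (by positivity))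
  have hx0 : 0 < x := by linarith
  set N : ℕ := ⌈x⌉₊ with hNdef
  have hN1 : x ≤ (N:ℝ) := Nat.le_ceil x
  have hN2 : (N:ℝ) ≤ 2 * x := by
    have := Nat.ceil_lt_add_one hx0.le
    simp only [← hNdef] at this
    linarith
  have hNpos : 0 < N := by
    have : (0:ℝ) < (N:ℝ) := lt_of_lt_of_le hx0 hN1
    exact_mod_cast this
  have hxk : x ^ k * s = 1 := by
    rw [hxdef, ← Real.rpow_natCast (s ^ (-(1/(k:ℝ)))) k, ← Real.rpow_mul hs.le]
    rw [show -(1/(k:ℝ)) * k = -1 by field_simp]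
    rw [Real.rpow_neg_one]
    field_simp
  -- each term with j < N is at least exp(-2^k)/s^2
  have hterm : ∀ j ∈ Finset.range N, Real.exp (-(2:ℝ)^k) / s^2 ≤
      (((j + 1) ^ (2 * k) : ℕ) : ℝ) * Real.exp (-((((j + 1) ^ k : ℕ) : ℝ) * s)) /
      (1 - Real.exp (-((((j + 1) ^ k : ℕ) : ℝ) * s))) ^ 2 := by
    intro j hj
    rw [Finset.mem_range] at hj
    have hj1 : ((j:ℝ) + 1) ≤ (N:ℝ) := by exact_mod_cast Nat.succ_le_of_lt hj
    set A : ℝ := (((j + 1) ^ k : ℕ) : ℝ) with hAdef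
    have hA1 : (1:ℝ) ≤ A := by
      rw [hAdef, Nat.cast_pow]; push_cast
      exact one_le_pow₀ (le_add_of_nonneg_left j.cast_nonneg)
    have hAle : A ≤ (2*x) ^ k := by
      rw [hAdef, Nat.cast_pow]
      push_cast
      apply pow_le_pow_left₀ (by positivity) (by linarith)
    set t : ℝ := A * s with htdef
    have ht0 : 0 < t := by positivity
    have ht2 : t ≤ (2:ℝ)^k := by
      rw [htdef]
      calc A * s ≤ (2*x)^k * s := by nlinarith
        _ = 2^k * (x^k * s) := by rw [mul_pow]; ring
        _ = 2^k := by rw [hxk, mul_one]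
    have hB : (((j + 1) ^ (2*k) : ℕ) : ℝ) = A^2 := by
      rw [hAdef, Nat.cast_pow, Nat.cast_pow]; push_cast; rw [← pow_mul]; ring_nf
    have he1 : Real.exp (-t) < 1 := Real.exp_lt_one_iff.2 (by linarith)
    have hden0 : 0 < 1 - Real.exp (-t) := by linarith
    have hden1 : 1 - Real.exp (-t) ≤ t := by
      have := Real.add_one_le_exp (-t)
      linarith
    have hee : Real.exp (-(2:ℝ)^k) ≤ Real.exp (-t) := Real.exp_le_exp.2 (by linarith)
    rw [hB, div_le_div_iff₀ (by positivity) (by positivity)]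
    calc Real.exp (-(2:ℝ)^k) * (1 - Real.exp (-t))^2
        ≤ Real.exp (-t) * t^2 := by
          have hq : (1 - Real.exp (-t))^2 ≤ t^2 := by nlinarith
          have h5 := mul_le_mul_of_nonneg_left hq (Real.exp_pos (-(2:ℝ)^k)).le
          have h6 := mul_le_mul_of_nonneg_right hee (sq_nonneg t)
          linarith
      _ = A^2 * Real.exp (-t) * s^2 := by rw [htdef]; ring
  have hsum := Finset.sum_le_sum hterm
  rw [Finset.sum_const, Finset.card_range, nsmul_eq_mul] at hsum
  have htsum := Summable.sum_le_tsum (Finset.range N) (fun j _ => sig_term_nonneg hs j)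
    (summable_sigSq hk hs)
  have hfinal : Real.exp (-(2:ℝ)^k) * s ^ (-(2 + 1/(k:ℝ))) ≤
      (N:ℝ) * (Real.exp (-(2:ℝ)^k) / s^2) := by
    have hrw : s ^ (-(2 + 1/(k:ℝ))) = x * s ^ ((-2:ℝ)) := by
      rw [hxdef, ← Real.rpow_add hs]; ring_nf
    have h2 : s ^ ((-2:ℝ)) = 1 / s^2 := by
      rw [show ((-2:ℝ)) = -(2:ℕ) by norm_num, Real.rpow_neg hs.le, Real.rpow_natCast,
        one_div]
    rw [hrw, h2, show Real.exp (-(2:ℝ)^k) * (x * (1/s^2))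
        = x * (Real.exp (-(2:ℝ)^k) / s^2) by ring]
    gcongr
  calc Real.exp (-(2:ℝ)^k) * s ^ (-(2 + 1/(k:ℝ))) ≤ (N:ℝ) * (Real.exp (-(2:ℝ)^k) / s^2) := hfinal
    _ ≤ ∑ j ∈ Finset.range N, (((j + 1) ^ (2 * k) : ℕ) : ℝ) *
        Real.exp (-((((j + 1) ^ k : ℕ) : ℝ) * s)) /
        (1 - Real.exp (-((((j + 1) ^ k : ℕ) : ℝ) * s))) ^ 2 := hsum
    _ ≤ sigSq k s := htsum


lemma summable_zeta {k : ℕ} (hk : 1 ≤ k) :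
    Summable (fun n : ℕ => ((n:ℝ)+1) ^ (-(1 + 1/(k:ℝ)))) := by
  have hp : (-(1 + 1/(k:ℝ))) < -1 := by
    have : (0:ℝ) < 1/(k:ℝ) := by positivity
    linarith
  have h := (Real.summable_nat_rpow (p := -(1 + 1/(k:ℝ)))).2 hp
  have h2 := h.comp_injective (show Function.Injective (fun n : ℕ => n + 1) from
    fun a b hab => by simpa using hab)
  refine h2.congr fun j => ?_
  simp [Function.comp]

lemma zeta_re_eq {k : ℕ} (hk : 1 ≤ k) :
    (riemannZeta (1 + 1 / (k : ℂ))).re = ∑' n : ℕ, ((n:ℝ)+1) ^ (-(1 + 1/(k:ℝ))) := by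
  have hk0 : (0:ℝ) < k := by exact_mod_cast hk
  have hcast : (1 + 1 / (k : ℂ)) = (((1 + 1/(k:ℝ)) : ℝ) : ℂ) := by
    push_cast; ring
  have hre : 1 < (1 + 1 / (k : ℂ)).re := by
    rw [hcast, Complex.ofReal_re]
    have : (0:ℝ) < 1/(k:ℝ) := by positivity
    linarith
  rw [zeta_eq_tsum_one_div_nat_add_one_cpow hre]
  have hterm : ∀ n : ℕ, (1 : ℂ) / ((n:ℂ) + 1) ^ (1 + 1 / (k : ℂ))
      = (((((n:ℝ)+1) ^ (-(1 + 1/(k:ℝ)))) : ℝ) : ℂ) := by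
    intro n
    rw [hcast]
    rw [show ((n:ℂ) + 1) = (((n:ℝ)+1 : ℝ) : ℂ) by push_cast; ring]
    rw [← Complex.ofReal_cpow (by positivity)]
    rw [Real.rpow_neg (by positivity), one_div, ← Complex.ofReal_inv]
  simp_rw [hterm]
  rw [← Complex.ofReal_tsum, Complex.ofReal_re]

lemma lint_eq {k : ℕ} (hk : 1 ≤ k) {b : ℝ} (hb : 0 < b) :
    ∫⁻ x in Ioi (0:ℝ), ENNReal.ofReal (x ^ k * Real.exp (-(b * x ^ k)))
      = ENNReal.ofReal (b ^ (-(1 + 1/(k:ℝ))) * (1/(k:ℝ)) * Real.Gamma (1 + 1/(k:ℝ))) := by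
  have hk0 : (0:ℝ) < k := by exact_mod_cast hk
  have hrw : ∀ x : ℝ, x ^ k * Real.exp (-(b * x ^ k))
      = x ^ ((k:ℝ)) * Real.exp (-b * x ^ ((k:ℝ))) := by
    intro x
    rw [Real.rpow_natCast, neg_mul]
  simp_rw [hrw]
  have hint : IntegrableOn (fun x : ℝ => x ^ ((k:ℝ)) * Real.exp (-b * x ^ ((k:ℝ)))) (Ioi 0) :=
    integrableOn_rpow_mul_exp_neg_mul_rpow (by linarith) (by exact_mod_cast hk) hb
  rw [← MeasureTheory.ofReal_integral_eq_lintegral_ofReal hint]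
  · rw [integral_rpow_mul_exp_neg_mul_rpow hk0 (by linarith) hb]
    congr 2
    · congr 1
      field_simp
    · field_simp
  · filter_upwards [ae_restrict_mem measurableSet_Ioi] with x hx
    have hx0 : (0:ℝ) < x := hx
    positivity


lemma gfun_series {k : ℕ} {s : ℝ} (hs : 0 < s) {x : ℝ} (hx : 0 < x) :
    HasSum (fun n : ℕ => x ^ k * Real.exp (-((((n:ℝ)+1) * s) * x ^ k))) (gfun k s x) := by
  set r : ℝ := Real.exp (-(s * x ^ k)) with hr
  have hr0 : 0 < r := Real.exp_pos _
  have hr1 : r < 1 := Real.exp_lt_one_iff.2 (by simp only [neg_neg, Left.neg_neg_iff]; positivity)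
  have hgeo := (hasSum_geometric_of_lt_one hr0.le hr1).mul_left (x ^ k * r)
  have hterm : (fun n : ℕ => x ^ k * r * r ^ n)
      = fun n : ℕ => x ^ k * Real.exp (-((((n:ℝ)+1) * s) * x ^ k)) := by
    funext n
    rw [hr, ← Real.exp_nat_mul, mul_assoc, ← Real.exp_add]
    congr 2
    ring
  have hval : gfun k s x = x ^ k * r * (1 - r)⁻¹ := by
    rw [gfun_eq hs hx, ← hr, div_eq_mul_inv, mul_assoc]
  rw [hval]
  rw [hterm] at hgeo
  exact hgeo

lemma I_eq {k : ℕ} (hk : 1 ≤ k) {s : ℝ} (hs : 0 < s) :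
    ∫⁻ x in Ioi (0:ℝ), ENNReal.ofReal (gfun k s x)
      = ENNReal.ofReal (omega1 k * s ^ (-(1 + 1/(k:ℝ)))) := by
  have hk0 : (0:ℝ) < k := by exact_mod_cast hk
  have h1 : ∫⁻ x in Ioi (0:ℝ), ENNReal.ofReal (gfun k s x)
      = ∫⁻ x in Ioi (0:ℝ),
        ∑' n : ℕ, ENNReal.ofReal (x ^ k * Real.exp (-((((n:ℝ)+1) * s) * x ^ k))) := by
    apply setLIntegral_congr_fun measurableSet_Ioi
    intro x hx
    beta_reduce
    have hx0 : (0:ℝ) < x := hx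
    rw [← (gfun_series hs hx0).tsum_eq]
    exact ENNReal.ofReal_tsum_of_nonneg (fun n => by positivity) (gfun_series hs hx0).summable
  rw [h1, lintegral_tsum (fun n => by
    apply Measurable.aemeasurable
    apply Measurable.ennreal_ofReal
    fun_prop)]
  have h2 : ∀ n : ℕ,
      ∫⁻ x in Ioi (0:ℝ), ENNReal.ofReal (x ^ k * Real.exp (-((((n:ℝ)+1) * s) * x ^ k)))
      = ENNReal.ofReal ((((n:ℝ)+1) * s) ^ (-(1 + 1/(k:ℝ))) * (1/(k:ℝ))
          * Real.Gamma (1 + 1/(k:ℝ))) := fun n => lint_eq hk (by positivity)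
  simp_rw [h2]
  have hc : ∀ n : ℕ, (((n:ℝ)+1) * s) ^ (-(1 + 1/(k:ℝ))) * (1/(k:ℝ)) * Real.Gamma (1 + 1/(k:ℝ))
      = ((1/(k:ℝ)) * Real.Gamma (1 + 1/(k:ℝ)) * s ^ (-(1 + 1/(k:ℝ))))
          * (((n:ℝ)+1) ^ (-(1 + 1/(k:ℝ)))) := by
    intro n
    rw [Real.mul_rpow (by positivity) hs.le]
    ring
  simp_rw [hc]
  rw [← ENNReal.ofReal_tsum_of_nonneg (fun n => by positivity)
    ((summable_zeta hk).mul_left _)]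
  rw [tsum_mul_left]
  rw [← zeta_re_eq hk]
  congr 1
  rw [omega1]
  ring


lemma iUnion_Ioc_eq : (⋃ j : ℕ, Ioc (j:ℝ) ((j:ℝ)+1)) = Ioi (0:ℝ) := by
  ext x
  simp only [mem_iUnion, mem_Ioc, mem_Ioi]
  constructor
  · rintro ⟨j, hj1, _⟩
    have : (0:ℝ) ≤ (j:ℝ) := j.cast_nonneg
    linarith
  · intro hx
    refine ⟨⌈x⌉₊ - 1, ?_, ?_⟩
    · have h1 : (⌈x⌉₊ : ℝ) < x + 1 := Nat.ceil_lt_add_one hx.le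
      have h2 : 1 ≤ ⌈x⌉₊ := Nat.one_le_ceil_iff.2 hx
      have : ((⌈x⌉₊ - 1 : ℕ) : ℝ) = (⌈x⌉₊ : ℝ) - 1 := by
        push_cast [h2]; ring
      rw [this]; linarith
    · have h2 : 1 ≤ ⌈x⌉₊ := Nat.one_le_ceil_iff.2 hx
      have : ((⌈x⌉₊ - 1 : ℕ) : ℝ) = (⌈x⌉₊ : ℝ) - 1 := by
        push_cast [h2]; ring
      rw [this]
      have := Nat.le_ceil x
      linarith

set_option maxHeartbeats 1000000 in
lemma mkS_close {k : ℕ} (hk : 1 ≤ k) {s : ℝ} (hs : 0 < s) :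
    |mkS k s - omega1 k * s ^ (-(1 + 1/(k:ℝ)))| ≤ 1/s := by
  set M : ℝ := omega1 k * s ^ (-(1 + 1/(k:ℝ))) with hM
  set P : ℕ → ℝ≥0∞ := fun j => ∫⁻ x in Ioc (j:ℝ) ((j:ℝ)+1), ENNReal.ofReal (gfun k s x)
    with hP
  have hmeasg : Measurable fun x => ENNReal.ofReal (gfun k s x) := by
    apply Measurable.ennreal_ofReal
    unfold gfun
    fun_prop
  have hdecomp : ∫⁻ x in Ioi (0:ℝ), ENNReal.ofReal (gfun k s x) = ∑' j : ℕ, P j := by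
    rw [← iUnion_Ioc_eq, lintegral_iUnion (fun j => measurableSet_Ioc) ?_ _]
    intro i j hij
    simp only [Function.onFun]
    rw [Set.Ioc_disjoint_Ioc]
    have h1 : (min i j : ℕ) + 1 ≤ max i j := by omega
    have h2 : ((min i j : ℕ) : ℝ) + 1 ≤ ((max i j : ℕ) : ℝ) := by exact_mod_cast h1
    rw [Nat.cast_min, Nat.cast_max] at h2
    rw [show min ((i:ℝ)+1) ((j:ℝ)+1) = min (i:ℝ) (j:ℝ) + 1 from min_add_add_right _ _ _]
    exact h2
  
  have hvol : ∀ j : ℕ, volume (Ioc (j:ℝ) ((j:ℝ)+1)) = 1 := by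
    intro j; rw [Real.volume_Ioc]; simp
  have hup0 : P 0 ≤ ENNReal.ofReal (1/s) := by
    calc P 0 ≤ ∫⁻ _ in Ioc ((0:ℕ):ℝ) (((0:ℕ):ℝ)+1), ENNReal.ofReal (1/s) := by
          apply setLIntegral_mono measurable_const
          intro x hx
          exact ENNReal.ofReal_le_ofReal (gfun_le hs (by simpa using hx.1))
      _ = ENNReal.ofReal (1/s) := by rw [setLIntegral_const, hvol 0, mul_one]
  have hup : ∀ j : ℕ, P (j+1) ≤ ENNReal.ofReal (gfun k s ((j:ℝ)+1)) := by
    intro j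
    have hj0 : (0:ℝ) < (j:ℝ)+1 := by positivity
    calc P (j+1) ≤ ∫⁻ _ in Ioc (((j+1):ℕ):ℝ) ((((j+1):ℕ):ℝ)+1),
          ENNReal.ofReal (gfun k s ((j:ℝ)+1)) := by
          apply setLIntegral_mono measurable_const
          intro x hx
          apply ENNReal.ofReal_le_ofReal
          apply gfun_anti hs hj0
          have := hx.1
          push_cast at this
          linarith
      _ = ENNReal.ofReal (gfun k s ((j:ℝ)+1)) := by
          rw [setLIntegral_const, hvol (j+1), mul_one]
  have hlow : ∀ j : ℕ, ENNReal.ofReal (gfun k s ((j:ℝ)+1)) ≤ P j := by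
    intro j
    calc ENNReal.ofReal (gfun k s ((j:ℝ)+1))
        = ∫⁻ _ in Ioc ((j:ℕ):ℝ) (((j:ℕ):ℝ)+1), ENNReal.ofReal (gfun k s ((j:ℝ)+1)) := by
          rw [setLIntegral_const, hvol j, mul_one]
      _ ≤ P j := by
          apply setLIntegral_mono hmeasg
          intro x hx
          apply ENNReal.ofReal_le_ofReal
          apply gfun_anti hs _ hx.2
          have h0 : (0:ℝ) ≤ (j:ℝ) := j.cast_nonneg
          linarith [hx.1]
  have hmknn : 0 ≤ mkS k s := by
    rw [mkS_eq hs]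
    exact tsum_nonneg fun j => gfun_nonneg hs (by positivity)
  have hofmk : ENNReal.ofReal (mkS k s) = ∑' j : ℕ, ENNReal.ofReal (gfun k s ((j:ℝ)+1)) := by
    rw [mkS_eq hs]
    exact ENNReal.ofReal_tsum_of_nonneg (fun j => gfun_nonneg hs (by positivity))
      (summable_gfun hk hs)
  have hI := I_eq hk hs
  rw [hdecomp] at hI
  have key1 : ENNReal.ofReal (mkS k s) ≤ ENNReal.ofReal M := by
    rw [hofmk, hM, ← hI]
    exact ENNReal.tsum_le_tsum hlow
  have key2 : ENNReal.ofReal M ≤ ENNReal.ofReal (1/s + mkS k s) := by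
    have hsplit : ∑' j : ℕ, P j = P 0 + ∑' j : ℕ, P (j+1) :=
      tsum_eq_zero_add' (f := P) ENNReal.summable
    rw [hM, ← hI, hsplit, ENNReal.ofReal_add (by positivity) hmknn, hofmk]
    exact add_le_add hup0 (ENNReal.tsum_le_tsum hup)
  have hMnn : 0 ≤ M := by
    rw [hM, omega1]
    have hz : 0 ≤ (riemannZeta (1 + 1 / (k : ℂ))).re := by
      rw [zeta_re_eq hk]
      exact tsum_nonneg fun n => by positivity
    have hg : 0 < Real.Gamma (1 + 1/(k:ℝ)) := Real.Gamma_pos_of_pos (by positivity)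
    have hr : (0:ℝ) ≤ s ^ (-(1 + 1/(k:ℝ))) := (Real.rpow_pos_of_pos hs _).le
    have h1k : (0:ℝ) ≤ 1/(k:ℝ) := by positivity
    exact mul_nonneg (mul_nonneg (mul_nonneg h1k hz) hg.le) hr
  have h1 : mkS k s ≤ M := (ENNReal.ofReal_le_ofReal_iff hMnn).1 key1
  have h2 : M ≤ 1/s + mkS k s :=
    (ENNReal.ofReal_le_ofReal_iff (by positivity)).1 key2
  rw [abs_le]
  constructor <;> [linarith; linarith]


end Aux

theorem stmt7 (k : ℕ) (hk : 1 ≤ k) :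
    ∃ C > (0 : ℝ), ∃ s₀ > (0 : ℝ), ∀ s : ℝ, 0 < s → s < s₀ →
      |mkS k s - omega1 k * s ^ (-(1 + 1 / (k : ℝ)))| ≤
        C * s ^ (1 / (2 * (k : ℝ))) * Real.sqrt (sigSq k s) := by
  refine ⟨Real.exp ((2:ℝ)^k), Real.exp_pos _, 1, one_pos, fun s hs hs1 => ?_⟩
  have h1 := mkS_close hk hs
  have h2 := sigSq_lower hk hs hs1
  have hsqe : Real.sqrt (Real.exp (-(2:ℝ)^k)) = Real.exp (-(2:ℝ)^k/2) := by
    rw [show Real.exp (-(2:ℝ)^k) = (Real.exp (-(2:ℝ)^k/2))^2 by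
      rw [sq, ← Real.exp_add]; ring_nf]
    exact Real.sqrt_sq (Real.exp_pos _).le
  have hsq : Real.exp (-(2:ℝ)^k/2) * s ^ (-(1 + 1/(2*(k:ℝ)))) ≤ Real.sqrt (sigSq k s) := by
    have h3 := Real.sqrt_le_sqrt h2
    rw [Real.sqrt_mul (Real.exp_pos _).le, hsqe] at h3
    rw [Real.sqrt_eq_rpow, ← Real.rpow_mul hs.le] at h3
    have hk0 : (k:ℝ) ≠ 0 := by positivity
    rw [show (-(2 + 1/(k:ℝ))) * (1/2) = -(1 + 1/(2*(k:ℝ))) by ring] at h3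
    exact h3
  have hsp : (0:ℝ) ≤ Real.exp ((2:ℝ)^k) * s ^ (1/(2*(k:ℝ))) := by positivity
  have step := mul_le_mul_of_nonneg_left hsq hsp
  have heq : Real.exp ((2:ℝ)^k) * s ^ (1/(2*(k:ℝ)))
        * (Real.exp (-(2:ℝ)^k/2) * s ^ (-(1 + 1/(2*(k:ℝ)))))
      = (Real.exp ((2:ℝ)^k) * Real.exp (-(2:ℝ)^k/2))
        * (s ^ (1/(2*(k:ℝ))) * s ^ (-(1 + 1/(2*(k:ℝ))))) := by ring
  have e1 : s ^ (1/(2*(k:ℝ))) * s ^ (-(1 + 1/(2*(k:ℝ)))) = 1/s := by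
    rw [← Real.rpow_add hs, show 1/(2*(k:ℝ)) + -(1+1/(2*(k:ℝ))) = -1 by ring,
      Real.rpow_neg_one, one_div]
  have e2 : 1 ≤ Real.exp ((2:ℝ)^k) * Real.exp (-(2:ℝ)^k/2) := by
    rw [← Real.exp_add, show (2:ℝ)^k + -(2:ℝ)^k/2 = 2^k/2 by ring]
    exact Real.one_le_exp (by positivity)
  rw [heq, e1] at step
  have hds : 0 < 1/s := by positivity
  calc |mkS k s - omega1 k * s ^ (-(1 + 1/(k:ℝ)))| ≤ 1/s := h1
    _ ≤ Real.exp ((2:ℝ)^k) * s ^ (1/(2*(k:ℝ))) * Real.sqrt (sigSq k s) := by nlinarith
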